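/- arXiv:1602.06123 — 3 statements merged into one kernel-verified Lean document; each statement's English description precedes it below -/
import Mathlib

section
/- Let $S$ be a sublinear operator on simple functions on $\mathbb{R}$ with $\|Sf\|_\infty \le C\|f\|_1$, and define $Tf(x) = |x|^{1/(p_0-1)} Sf(x)$ for some fixed $p_0 > 1$. Let $\mu$ be the measure $d\mu = |x|^{-p_0/(p_0-1)} dx$ on $\mathbb{R}$. Then for every $\lambda > 0$, $\mu(\{x : |Tf(x)| > \lambda\}) \le \frac{C'}{\lambda} \|f\|_{L^1}$ for some constant $C'$ depending only on $C$ and $p_0$; that is, $T$ maps $L^1(\mathbb{R})$ to weak $L^1(\mathbb{R}, d\mu)$. -/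
open MeasureTheory ENNReal

theorem stmt1 (p₀ : ℝ) (hp₀ : 1 < p₀) (S : (ℝ → ℝ) → (ℝ → ℝ)) (C : ℝ)
    (hsub : ∀ f g : SimpleFunc ℝ ℝ, ∀ x : ℝ,
      |S (⇑f + ⇑g) x| ≤ |S ⇑f x| + |S ⇑g x|)
    (hhom : ∀ (c : ℝ) (f : SimpleFunc ℝ ℝ), ∀ x : ℝ,
      |S (fun y => c * f y) x| = |c| * |S ⇑f x|)
    (h1 : ∀ f : SimpleFunc ℝ ℝ,
      eLpNorm (S ⇑f) ∞ volume ≤ ENNReal.ofReal C * eLpNorm (⇑f) 1 volume) :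
    ∃ C' : ℝ, 0 < C' ∧ ∀ f : SimpleFunc ℝ ℝ, ∀ lam : ℝ, 0 < lam →
      (volume.withDensity fun x : ℝ => ENNReal.ofReal (|x| ^ (-(p₀ / (p₀ - 1)))))
          {x : ℝ | lam < |x| ^ (1 / (p₀ - 1)) * |S ⇑f x|} ≤
        ENNReal.ofReal (C' / lam) * ∫⁻ x : ℝ, ENNReal.ofReal |f x| := by
  have hp1 : (0:ℝ) < p₀ - 1 := by linarith
  set q : ℝ := p₀ / (p₀ - 1) with hq_def
  have hq1 : 1 < q := (one_lt_div hp1).2 (by linarith)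
  set μ := volume.withDensity fun x : ℝ => ENNReal.ofReal (|x| ^ (-q)) with hμ
  refine ⟨2 * (p₀ - 1) * (|C| + 1), by positivity, ?_⟩
  intro f lam hlam
  set L := ∫⁻ x : ℝ, ENNReal.ofReal |f x| with hL_def
  by_cases hLtop : L = ⊤
  · rw [hLtop, ENNReal.mul_top]
    · exact le_top
    · simp only [ne_eq, ENNReal.ofReal_eq_zero, not_le]
      positivity
  -- L is finite
  have hLf : eLpNorm (⇑f) 1 volume = L := by
    rw [eLpNorm_one_eq_lintegral_enorm, hL_def]
    congr 1
    ext x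
    rw [← ofReal_norm_eq_enorm, Real.norm_eq_abs]
  set M : ℝ := max C 0 * L.toReal with hM_def
  have hM0 : 0 ≤ M := mul_nonneg (le_max_right _ _) ENNReal.toReal_nonneg
  have hae : ∀ᵐ x ∂volume, |S (⇑f) x| ≤ M := by
    have h := h1 f
    rw [eLpNorm_exponent_top, hLf] at h
    have hCL : ENNReal.ofReal C * L ≤ ENNReal.ofReal M := by
      rw [hM_def, ENNReal.ofReal_mul (le_max_right _ _)]
      rw [ENNReal.ofReal_toReal hLtop]
      gcongr
      exact le_max_left C 0
    filter_upwards [ae_le_eLpNormEssSup (f := S ⇑f) (μ := volume)] with x hx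
    have : (‖S (⇑f) x‖₊ : ℝ≥0∞) ≤ ENNReal.ofReal M := le_trans hx (le_trans h hCL)
    rw [← enorm_eq_nnnorm, ← ofReal_norm_eq_enorm, Real.norm_eq_abs] at this
    exact (ENNReal.ofReal_le_ofReal_iff hM0).1 this
  set A := {x : ℝ | lam < |x| ^ (1 / (p₀ - 1)) * |S (⇑f) x|} with hA_def
  by_cases hMpos : 0 < M
  swap
  · -- M = 0 : S f = 0 a.e., so A is null
    have hM0' : M = 0 := le_antisymm (not_lt.1 hMpos) hM0
    have hnull : volume A = 0 := by
      rw [measure_eq_zero_iff_ae_notMem]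
      filter_upwards [hae] with x hx hcon
      simp only [hA_def, Set.mem_setOf_eq] at hcon
      have h1' : |S (⇑f) x| = 0 := le_antisymm (hM0' ▸ hx) (abs_nonneg _)
      rw [h1', mul_zero] at hcon
      exact absurd hcon (not_lt.2 hlam.le)
    calc μ A = 0 := withDensity_absolutelyContinuous volume _ hnull
    _ ≤ _ := zero_le
  -- main case
  set r : ℝ := (lam / M) ^ (p₀ - 1) with hr_def
  have hlM : 0 < lam / M := div_pos hlam hMpos
  have hr : 0 < r := Real.rpow_pos_of_pos hlM _
  set B := {x : ℝ | r < |x|} with hB_def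
  have hAB : A ≤ᵐ[μ] B := by
    apply (withDensity_absolutelyContinuous volume _).ae_le
    filter_upwards [hae] with x hx hxA
    simp only [hA_def, Set.mem_setOf_eq] at hxA
    simp only [hB_def, Set.mem_setOf_eq]
    have hx1 : lam < |x| ^ (1 / (p₀ - 1)) * M := by
      refine lt_of_lt_of_le hxA ?_
      have hpow : (0:ℝ) ≤ |x| ^ (1 / (p₀ - 1)) := Real.rpow_nonneg (abs_nonneg _) _
      exact mul_le_mul_of_nonneg_left hx hpow
    have hx2 : lam / M < |x| ^ (1 / (p₀ - 1)) := (div_lt_iff₀ hMpos).2 hx1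
    have := Real.rpow_lt_rpow hlM.le hx2 hp1
    rw [← Real.rpow_mul (abs_nonneg x), one_div, inv_mul_cancel₀ (ne_of_gt hp1),
      Real.rpow_one] at this
    exact this
  have hBmeas : MeasurableSet B :=
    measurableSet_lt measurable_const (by fun_prop)
  have hBsplit : B = Set.Iio (-r) ∪ Set.Ioi r := by
    ext x
    simp only [hB_def, Set.mem_setOf_eq, Set.mem_union, Set.mem_Iio, Set.mem_Ioi,
      lt_abs, lt_neg]
    tauto
  -- value of the right half integral
  have hIoiVal : ∫⁻ x in Set.Ioi r, ENNReal.ofReal (|x| ^ (-q)) ∂volume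
      = ENNReal.ofReal ((p₀ - 1) * (M / lam)) := by
    have hcongr : ∀ x ∈ Set.Ioi r, ENNReal.ofReal (|x| ^ (-q)) = ENNReal.ofReal (x ^ (-q)) := by
      intro x hx
      rw [abs_of_pos (lt_trans hr hx)]
    rw [setLIntegral_congr_fun measurableSet_Ioi hcongr]
    have hint : IntegrableOn (fun x : ℝ => x ^ (-q)) (Set.Ioi r) :=
      integrableOn_Ioi_rpow_of_lt (by linarith) hr
    rw [← ofReal_integral_eq_lintegral_ofReal hint ?_]
    · congr 1
      rw [integral_Ioi_rpow_of_lt (by linarith) hr]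
      have hq1' : -q + 1 = -(1 / (p₀ - 1)) := by
        rw [hq_def]
        field_simp
        ring
      rw [hq1', hr_def, ← Real.rpow_mul hlM.le]
      have h2 : (p₀ - 1) * -(1 / (p₀ - 1)) = -1 := by field_simp
      rw [h2, Real.rpow_neg_one, inv_div]
      field_simp
    · filter_upwards [self_mem_ae_restrict measurableSet_Ioi] with x hx
      exact Real.rpow_nonneg (le_of_lt (lt_trans hr hx)) _
  -- the left half equals the right half by symmetry
  have hIioVal : ∫⁻ x in Set.Iio (-r), ENNReal.ofReal (|x| ^ (-q)) ∂volume
      = ∫⁻ x in Set.Ioi r, ENNReal.ofReal (|x| ^ (-q)) ∂volume := by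
    have hneg : Measurable (fun x : ℝ => -x) := measurable_neg
    have hmeasg : Measurable (fun x : ℝ => ENNReal.ofReal (|x| ^ (-q))) := by
      apply ENNReal.measurable_ofReal.comp
      fun_prop
    calc ∫⁻ x in Set.Iio (-r), ENNReal.ofReal (|x| ^ (-q)) ∂volume
        = ∫⁻ x in Set.Iio (-r), ENNReal.ofReal (|x| ^ (-q))
            ∂(Measure.map (fun x : ℝ => -x) volume) := by
          rw [Measure.map_neg_eq_self (volume : Measure ℝ)]
      _ = ∫⁻ x in (fun x : ℝ => -x) ⁻¹' (Set.Iio (-r)), ENNReal.ofReal (|(-x)| ^ (-q)) ∂volume := by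
          rw [Measure.restrict_map hneg measurableSet_Iio, lintegral_map hmeasg hneg]
      _ = ∫⁻ x in Set.Ioi r, ENNReal.ofReal (|x| ^ (-q)) ∂volume := by
          congr 1
          · ext x
            simp [neg_lt]
          · ext x
            rw [abs_neg]
  have hμB : μ B = ENNReal.ofReal (2 * (p₀ - 1) * (M / lam)) := by
    rw [hμ, withDensity_apply _ hBmeas, hBsplit,
      lintegral_union measurableSet_Ioi]
    · rw [hIioVal, hIoiVal, ← ENNReal.ofReal_add (by positivity) (by positivity)]
      congr 1
      ring
    · rw [Set.disjoint_left]
      intro x hx1 hx2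
      simp only [Set.mem_Iio] at hx1
      simp only [Set.mem_Ioi] at hx2
      linarith
  calc μ A ≤ μ B := measure_mono_ae hAB
    _ = ENNReal.ofReal (2 * (p₀ - 1) * (M / lam)) := hμB
    _ ≤ ENNReal.ofReal (2 * (p₀ - 1) * (|C| + 1) / lam) * L := by
        rw [hM_def]
        have : 2 * (p₀ - 1) * (max C 0 * L.toReal / lam)
            = (2 * (p₀ - 1) * max C 0 / lam) * L.toReal := by ring
        rw [this, ENNReal.ofReal_mul (by positivity), ENNReal.ofReal_toReal hLtop]
        gcongr
        exact max_le (le_trans (le_abs_self C) (by linarith)) (by positivity)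
end

section
/- The operator $Wf(x) = \int_{-\infty}^{\infty} e^{i(x-y)^n} |x(x-y)^{n-3}|^{1/2} f(y)\,dy$, for an integer $n \ge 3$, is not bounded on $L^2(\mathbb{R})$. More precisely, if $f_N$ is the characteristic function of the interval $(N, N + (\pi/16)^{1/n})$ for $N \ge 1$, then $\|Wf_N\|_2 / \|f_N\|_2 \to \infty$ as $N \to \infty$. -/
open MeasureTheory ENNReal Real Filter

namespace Stmt9Aux

noncomputable def dl (n : ℕ) : ℝ := (π / 16) ^ ((1 : ℝ) / n)
noncomputable def aa (n : ℕ) : ℝ := (π / 8) ^ ((1 : ℝ) / n)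
noncomputable def bb (n : ℕ) : ℝ := (π / 4) ^ ((1 : ℝ) / n)
noncomputable def kc (n : ℕ) : ℝ :=
  Real.sqrt 2 / 2 * Real.sqrt ((aa n - dl n) ^ (n - 3)) * dl n

variable {n : ℕ}

lemma hn0 (hn : 3 ≤ n) : (0:ℝ) < 1 / n := by
  have : (0:ℝ) < n := by positivity
  positivity

lemma dl_pos (hn : 3 ≤ n) : 0 < dl n := Real.rpow_pos_of_pos (by positivity) _

lemma dl_lt_aa (hn : 3 ≤ n) : dl n < aa n :=
  Real.rpow_lt_rpow (by positivity) (by linarith [pi_pos]) (hn0 hn)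

lemma aa_lt_bb (hn : 3 ≤ n) : aa n < bb n :=
  Real.rpow_lt_rpow (by positivity) (by linarith [pi_pos]) (hn0 hn)

lemma bb_pow (hn : 3 ≤ n) : (bb n) ^ n = π / 4 := by
  have hn' : (n:ℝ) ≠ 0 := by positivity
  rw [bb, ← Real.rpow_natCast ((π/4) ^ ((1:ℝ)/n)) n, ← Real.rpow_mul (by positivity)]
  field_simp
  simp only [Real.rpow_one, pow_one]; ring

lemma bb_pos (hn : 3 ≤ n) : 0 < bb n := Real.rpow_pos_of_pos (by positivity) _

lemma kc_pos (hn : 3 ≤ n) : 0 < kc n := by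
  have h2 := dl_lt_aa hn
  have h3 : (0:ℝ) < (aa n - dl n) ^ (n - 3) := pow_pos (by linarith) _
  exact mul_pos (mul_pos (by positivity) (Real.sqrt_pos.2 h3)) (dl_pos hn)

lemma key (hn : 3 ≤ n) (N x : ℝ) (hN : 1 ≤ N)
    (hx : x ∈ Set.Ioo (N + aa n) (N + bb n)) :
    kc n * Real.sqrt N ≤
      ‖∫ y : ℝ, Complex.exp (Complex.I * ((x : ℂ) - (y : ℂ)) ^ n) *
        (Real.sqrt |x * (x - y) ^ (n - 3)| : ℂ) *
        ((Set.indicator (Set.Ioo N (N + dl n)) 1 y : ℝ) : ℂ)‖ := by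
  obtain ⟨hx1, hx2⟩ := hx
  set s : Set ℝ := Set.Ioo N (N + dl n) with hs
  set G : ℝ → ℂ := fun y => Complex.exp (Complex.I * ((x : ℂ) - (y : ℂ)) ^ n) *
        (Real.sqrt |x * (x - y) ^ (n - 3)| : ℂ) with hG
  have hGcont : Continuous G := by
    apply Continuous.mul
    · exact Complex.continuous_exp.comp (by continuity)
    · exact Complex.continuous_ofReal.comp
        (Real.continuous_sqrt.comp (continuous_abs.comp (by continuity)))
  have hind : (fun y : ℝ => G y * ((Set.indicator s 1 y : ℝ) : ℂ)) = s.indicator G := by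
    funext y
    by_cases hy : y ∈ s <;>
      simp [Set.indicator_of_mem, Set.indicator_of_notMem, hy]
  have hIntG : IntegrableOn G s :=
    (hGcont.integrableOn_Icc (a := N) (b := N + dl n)).mono_set Set.Ioo_subset_Icc_self
  have hInt : Integrable (s.indicator G) volume :=
    hIntG.integrable_indicator measurableSet_Ioo
  have hrw : (∫ y : ℝ, Complex.exp (Complex.I * ((x : ℂ) - (y : ℂ)) ^ n) *
        (Real.sqrt |x * (x - y) ^ (n - 3)| : ℂ) *
        ((Set.indicator s 1 y : ℝ) : ℂ)) = ∫ y in s, G y := by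
    rw [show (fun y : ℝ => Complex.exp (Complex.I * ((x : ℂ) - (y : ℂ)) ^ n) *
        (Real.sqrt |x * (x - y) ^ (n - 3)| : ℂ) *
        ((Set.indicator s 1 y : ℝ) : ℂ)) = s.indicator G from hind,
      integral_indicator measurableSet_Ioo]
  rw [hrw]
  -- real part
  have hre : ∀ y : ℝ, (G y).re = Real.cos ((x - y) ^ n) * Real.sqrt |x * (x - y) ^ (n - 3)| := by
    intro y
    have h1 : Complex.I * ((x : ℂ) - (y : ℂ)) ^ n = (((x - y) ^ n : ℝ) : ℂ) * Complex.I := by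
      push_cast; ring
    simp only [hG]
    rw [h1, mul_comm (Complex.exp _), Complex.re_ofReal_mul, Complex.exp_ofReal_mul_I_re,
      mul_comm]
  have hboundpt : ∀ y ∈ s, kc n / dl n * Real.sqrt N ≤ (G y).re := by
    intro y hy
    obtain ⟨hy1, hy2⟩ := hy
    rw [hre y]
    set t := x - y with ht
    have htl : aa n - dl n < t := by simp only [ht]; linarith
    have htpos : 0 < t := lt_trans (by linarith [dl_lt_aa hn]) htl
    have htu : t < bb n := by simp only [ht]; linarith
    -- cos bound
    have htn : t ^ n ≤ π / 4 := by
      calc t ^ n ≤ (bb n) ^ n := pow_le_pow_left₀ htpos.le htu.le n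
        _ = π / 4 := bb_pow hn
    have hcos : Real.sqrt 2 / 2 ≤ Real.cos (t ^ n) := by
      rw [← Real.cos_pi_div_four]
      exact Real.cos_le_cos_of_nonneg_of_le_pi (by positivity)
        (by linarith [pi_pos]) htn
    -- sqrt bound
    have hxpos : 0 < x := by nlinarith [dl_pos hn, dl_lt_aa hn, aa_lt_bb hn]
    have habs : |x * t ^ (n - 3)| = x * t ^ (n - 3) := abs_of_nonneg (by positivity)
    have hsq : Real.sqrt N * Real.sqrt ((aa n - dl n) ^ (n - 3)) ≤
        Real.sqrt |x * t ^ (n - 3)| := by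
      rw [habs, ← Real.sqrt_mul (by linarith)]
      apply Real.sqrt_le_sqrt
      have h1 : N ≤ x := by linarith [(dl_pos hn).trans (dl_lt_aa hn)]
      have h2 : (aa n - dl n) ^ (n - 3) ≤ t ^ (n - 3) :=
        pow_le_pow_left₀ (by linarith [dl_lt_aa hn]) htl.le _
      have h3 : (0:ℝ) ≤ (aa n - dl n) ^ (n-3) :=
        le_of_lt (pow_pos (by linarith [dl_lt_aa hn]) _)
      nlinarith
    have h4 : (0:ℝ) ≤ Real.sqrt N * Real.sqrt ((aa n - dl n) ^ (n - 3)) := by positivity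
    have h5 : (0:ℝ) < Real.sqrt 2 / 2 := by positivity
    have := mul_le_mul hcos hsq h4 (le_trans h5.le hcos)
    calc kc n / dl n * Real.sqrt N
        = Real.sqrt 2 / 2 * (Real.sqrt N * Real.sqrt ((aa n - dl n) ^ (n - 3))) := by
          rw [kc]; field_simp [(dl_pos hn).ne']
      _ ≤ Real.cos (t ^ n) * Real.sqrt |x * t ^ (n - 3)| := this
  -- integrate
  have hvol : (volume s).toReal = dl n := by
    rw [hs, Real.volume_Ioo]
    simp [ENNReal.toReal_ofReal (dl_pos hn).le]
  have hIntRe : IntegrableOn (fun y => (G y).re) s :=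
    (Complex.continuous_re.comp hGcont).integrableOn_Icc.mono_set Set.Ioo_subset_Icc_self
  have hge : kc n / dl n * Real.sqrt N * (volume s).toReal ≤ ∫ y in s, (G y).re :=
    setIntegral_ge_of_const_le_real measurableSet_Ioo
      (by rw [Real.volume_Ioo]; exact ENNReal.ofReal_ne_top) hboundpt hIntRe
  have hre2 : ∫ y in s, (G y).re = (∫ y in s, G y).re := integral_re hIntG.integrable
  calc kc n * Real.sqrt N = kc n / dl n * Real.sqrt N * dl n := by
        field_simp [(dl_pos hn).ne']
    _ ≤ (∫ y in s, G y).re := by rw [← hre2]; rw [hvol] at hge; exact hge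
    _ ≤ ‖∫ y in s, G y‖ := Complex.re_le_norm _

end Stmt9Aux

open Stmt9Aux in
theorem stmt9 (n : ℕ) (hn : 3 ≤ n) :
    Filter.Tendsto
      (fun N : ℝ =>
        eLpNorm
            (fun x : ℝ => ∫ y : ℝ,
              Complex.exp (Complex.I * ((x : ℂ) - (y : ℂ)) ^ n) *
                (Real.sqrt |x * (x - y) ^ (n - 3)| : ℂ) *
                (Set.indicator (Set.Ioo N (N + (π / 16) ^ ((1 : ℝ) / n))) 1 y : ℝ))
            2 volume /
          eLpNorm
            ((Set.indicator (Set.Ioo N (N + (π / 16) ^ ((1 : ℝ) / n))) 1 : ℝ → ℝ))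
            2 volume)
      Filter.atTop (nhds ⊤) := by
  simp only [show (π / 16 : ℝ) ^ ((1:ℝ)/n) = dl n from rfl]
  have hd := dl_pos hn
  have hba : 0 < bb n - aa n := sub_pos.2 (aa_lt_bb hn)
  have hK := kc_pos hn
  have hsd : 0 < Real.sqrt (dl n) := Real.sqrt_pos.2 hd
  set φ : ℝ → ℝ := fun N =>
    kc n * Real.sqrt N * Real.sqrt (bb n - aa n) / Real.sqrt (dl n) with hφ
  apply tendsto_nhds_top_mono (f := fun N => ENNReal.ofReal (φ N))
  · -- lower bound tends to ⊤
    apply ENNReal.tendsto_ofReal_atTop.comp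
    have hsqrt : Tendsto Real.sqrt atTop atTop := by
      have := tendsto_rpow_atTop (by norm_num : (0:ℝ) < 1/2)
      refine this.congr' ?_
      filter_upwards with x using (Real.sqrt_eq_rpow x).symm
    have : φ = fun N => (kc n * Real.sqrt (bb n - aa n) / Real.sqrt (dl n)) * Real.sqrt N := by
      funext N; rw [hφ]; ring
    rw [this]
    exact Tendsto.const_mul_atTop (by positivity) hsqrt
  · -- eventual inequality
    filter_upwards [eventually_ge_atTop (1:ℝ)] with N hN
    set cN := kc n * Real.sqrt N with hcN
    have hcN0 : 0 ≤ cN := by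
      have : 0 ≤ Real.sqrt N := Real.sqrt_nonneg N
      positivity
    set T : Set ℝ := Set.Ioo (N + aa n) (N + bb n) with hT
    -- numerator lower bound
    have hmono : eLpNorm (T.indicator fun _ => cN) 2 volume ≤
        eLpNorm (fun x : ℝ => ∫ y : ℝ,
          Complex.exp (Complex.I * ((x : ℂ) - (y : ℂ)) ^ n) *
            (Real.sqrt |x * (x - y) ^ (n - 3)| : ℂ) *
            ((Set.indicator (Set.Ioo N (N + dl n)) 1 y : ℝ) : ℂ)) 2 volume := by
      apply eLpNorm_mono
      intro x
      by_cases hx : x ∈ T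
      · rw [Set.indicator_of_mem hx, Real.norm_eq_abs, abs_of_nonneg hcN0]
        exact key hn N x hN hx
      · simp [Set.indicator_of_notMem hx]
    have hnum : eLpNorm (T.indicator fun _ => cN) 2 volume =
        ENNReal.ofReal (cN * Real.sqrt (bb n - aa n)) := by
      rw [eLpNorm_indicator_const measurableSet_Ioo (by norm_num) (by norm_num)]
      rw [Real.enorm_eq_ofReal hcN0, Real.volume_Ioo,
        show N + bb n - (N + aa n) = bb n - aa n by ring]
      rw [show ((2:ℝ≥0∞)).toReal = 2 by norm_num,
        ENNReal.ofReal_rpow_of_nonneg hba.le (by norm_num),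
        ← Real.sqrt_eq_rpow, ← ENNReal.ofReal_mul hcN0]
    have hden : eLpNorm ((Set.indicator (Set.Ioo N (N + dl n)) 1 : ℝ → ℝ)) 2 volume =
        ENNReal.ofReal (Real.sqrt (dl n)) := by
      rw [show (Set.indicator (Set.Ioo N (N + dl n)) 1 : ℝ → ℝ) =
        Set.indicator (Set.Ioo N (N + dl n)) (fun _ => (1:ℝ)) from rfl]
      rw [eLpNorm_indicator_const measurableSet_Ioo (by norm_num) (by norm_num)]
      rw [Real.volume_Ioo, show N + dl n - N = dl n by ring]
      rw [show ((2:ℝ≥0∞)).toReal = 2 by norm_num,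
        ENNReal.ofReal_rpow_of_nonneg hd.le (by norm_num), ← Real.sqrt_eq_rpow]
      simp
    calc ENNReal.ofReal (φ N)
        = ENNReal.ofReal (cN * Real.sqrt (bb n - aa n)) /
            ENNReal.ofReal (Real.sqrt (dl n)) := by
          rw [← ENNReal.ofReal_div_of_pos hsd, hφ, hcN]
      _ ≤ _ := by
          rw [hden]
          exact ENNReal.div_le_div_right (hnum ▸ hmono) _
end

section
/- Let $I = (a,b)$ be a bounded interval, $k \ge 2$ an integer, and $\phi \in C^k(I)$ real-valued with $|\phi^{(k)}(t)| \ge 1$ for all $t \in I$. Then there is a constant $C_k$ depending only on $k$ such that for all $\lambda \in \mathbb{R}\setminus\{0\}$ and all $\varphi \in C^1([a,b])$, $\big| \int_I e^{i\lambda \phi(t)} \varphi(t)\,dt \big| \le C_k |\lambda|^{-1/k} \big( |\varphi(b)| + \int_I |\varphi'(t)|\,dt \big)$. -/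
open MeasureTheory Real Set intervalIntegral Filter


-- sign constancy of a nonvanishing continuous function on an interval
lemma vdc_sign {f : ℝ → ℝ} {u v : ℝ} (hf : ContinuousOn f (Icc u v))
    (hne : ∀ t ∈ Icc u v, f t ≠ 0) :
    (∀ t ∈ Icc u v, 0 ≤ f t) ∨ (∀ t ∈ Icc u v, f t ≤ 0) := by
  by_contra h
  push_neg at h
  obtain ⟨⟨x, hx, hfx⟩, ⟨y, hy, hfy⟩⟩ := h
  have hsub : uIcc x y ⊆ Icc u v := by
    rw [uIcc_eq_union]
    exact union_subset (Icc_subset_Icc hx.1 hy.2) (Icc_subset_Icc hy.1 hx.2)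
  have : (0:ℝ) ∈ uIcc (f x) (f y) := by
    rw [Set.mem_uIcc]
    left; constructor <;> linarith
  obtain ⟨z, hz, hz0⟩ := intermediate_value_uIcc (hf.mono hsub) this
  exact hne z (hsub hz) hz0

-- growth lemma: derivative ≥ δ
lemma vdc_grow {g g' : ℝ → ℝ} {u v δ : ℝ}
    (hd : ∀ t ∈ Icc u v, HasDerivAt g (g' t) t)
    (hδ : ∀ t ∈ Icc u v, δ ≤ g' t) :
    ∀ x ∈ Icc u v, ∀ y ∈ Icc u v, x ≤ y → g x + δ * (y - x) ≤ g y := by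
  have hmono : MonotoneOn (fun t => g t - δ * t) (Icc u v) := by
    apply monotoneOn_of_deriv_nonneg (convex_Icc u v)
    · exact fun t ht => ((hd t ht).sub ((hasDerivAt_id t).const_mul δ)).continuousAt.continuousWithinAt
    · intro t ht
      have ht' : t ∈ Icc u v := interior_subset ht
      exact ((hd t ht').sub ((hasDerivAt_id t).const_mul δ)).differentiableAt.differentiableWithinAt
    · intro t ht
      have ht' : t ∈ Icc u v := interior_subset ht
      have hD : HasDerivAt (fun t => g t - δ * t) (g' t - δ) t := by
        have := (hd t ht').sub ((hasDerivAt_id t).const_mul δ); rw [mul_one] at this; exact this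
      rw [hD.deriv]
      linarith [hδ t ht']
  intro x hx y hy hxy
  have := hmono hx hy hxy
  simp only at this
  nlinarith

-- existence of pivot x0, one-sided version
lemma vdc_pivot_aux {g g' : ℝ → ℝ} {u v δ : ℝ} (huv : u ≤ v) (hδ : 0 < δ)
    (hd : ∀ t ∈ Icc u v, HasDerivAt g (g' t) t)
    (hlb : ∀ t ∈ Icc u v, δ ≤ g' t) :
    ∃ x0 ∈ Icc u v, ∀ x ∈ Icc u v, δ * |x - x0| ≤ |g x| := by
  have hgrow := vdc_grow hd hlb
  have hu : u ∈ Icc u v := left_mem_Icc.2 huv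
  have hv : v ∈ Icc u v := right_mem_Icc.2 huv
  rcases le_or_gt 0 (g u) with h0u | h0u
  · refine ⟨u, hu, fun x hx => ?_⟩
    have := hgrow u hu x hx hx.1
    rw [abs_of_nonneg (by linarith [hx.1] : (0:ℝ) ≤ x - u), abs_of_nonneg (by nlinarith [hx.1])]
    nlinarith [hx.1]
  rcases le_or_gt (g v) 0 with h0v | h0v
  · refine ⟨v, hv, fun x hx => ?_⟩
    have := hgrow x hx v hv hx.2
    rw [abs_of_nonpos (by linarith [hx.2] : x - v ≤ 0), abs_of_nonpos (by nlinarith [hx.2])]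
    nlinarith [hx.2]
  · have hcont : ContinuousOn g (Icc u v) :=
      fun t ht => (hd t ht).continuousAt.continuousWithinAt
    obtain ⟨x0, hx0, hgx0⟩ := intermediate_value_Icc huv hcont
      (⟨le_of_lt h0u, le_of_lt h0v⟩ : (0:ℝ) ∈ Icc (g u) (g v))
    refine ⟨x0, hx0, fun x hx => ?_⟩
    rcases le_total x0 x with hle | hle
    · have := hgrow x0 hx0 x hx hle
      rw [abs_of_nonneg (by linarith : (0:ℝ) ≤ x - x0), abs_of_nonneg (by nlinarith)]
      nlinarith
    · have := hgrow x hx x0 hx0 hle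
      rw [abs_of_nonpos (by linarith : x - x0 ≤ 0), abs_of_nonpos (by nlinarith)]
      nlinarith

-- existence of pivot, general version
lemma vdc_pivot {g g' : ℝ → ℝ} {u v δ : ℝ} (huv : u ≤ v) (hδ : 0 < δ)
    (hd : ∀ t ∈ Icc u v, HasDerivAt g (g' t) t)
    (hc : ContinuousOn g' (Icc u v))
    (hlb : ∀ t ∈ Icc u v, δ ≤ |g' t|) :
    ∃ x0 ∈ Icc u v, ∀ x ∈ Icc u v, δ * |x - x0| ≤ |g x| := by
  have hne : ∀ t ∈ Icc u v, g' t ≠ 0 := by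
    intro t ht h0
    have := hlb t ht; rw [h0] at this; simp at this; linarith
  rcases vdc_sign hc hne with hpos | hneg
  · apply vdc_pivot_aux huv hδ hd
    intro t ht
    have h1 := hlb t ht
    rw [abs_of_nonneg (hpos t ht)] at h1
    exact h1
  · obtain ⟨x0, hx0, H⟩ := vdc_pivot_aux (g := fun t => -g t) (g' := fun t => -g' t) huv hδ
      (fun t ht => (hd t ht).neg)
      (fun t ht => by
        have h1 := hlb t ht
        rw [abs_of_nonpos (hneg t ht)] at h1
        simpa using h1)
    refine ⟨x0, hx0, fun x hx => ?_⟩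
    have := H x hx
    rwa [abs_neg] at this


lemma vdc_osc1 {φ f1 f2 : ℝ → ℝ} {lam δ u v : ℝ} (hδ : 0 < δ) (hlam : lam ≠ 0) (huv : u ≤ v)
    (hd1 : ∀ t ∈ Icc u v, HasDerivAt φ (f1 t) t)
    (hd2 : ∀ t ∈ Icc u v, HasDerivAt f1 (f2 t) t)
    (hc2 : ContinuousOn f2 (Icc u v))
    (h1 : ∀ t ∈ Icc u v, δ ≤ |f1 t|)
    (hsgn : (∀ t ∈ Icc u v, 0 ≤ f2 t) ∨ (∀ t ∈ Icc u v, f2 t ≤ 0)) :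
    ‖∫ t in u..v, Complex.exp (Complex.I * lam * φ t)‖ ≤ 4 / (δ * |lam|) := by
  have huIcc : uIcc u v = Icc u v := uIcc_of_le huv
  set c : ℂ := Complex.I * lam with hc
  have hlam' : (0:ℝ) < |lam| := abs_pos.2 hlam
  have hcne : c ≠ 0 := by
    simp [hc, Complex.ext_iff, Complex.I_ne_zero, hlam]
  have hcnorm : ‖c‖ = |lam| := by
    rw [hc, norm_mul, Complex.norm_I, one_mul, Complex.norm_real, Real.norm_eq_abs]
  have hf1ne : ∀ t ∈ Icc u v, f1 t ≠ 0 := by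
    intro t ht h0
    have := h1 t ht; rw [h0, abs_zero] at this; linarith
  have hcf1ne : ∀ t ∈ Icc u v, c * (f1 t : ℂ) ≠ 0 := fun t ht =>
    mul_ne_zero hcne (Complex.ofReal_ne_zero.2 (hf1ne t ht))
  set E : ℝ → ℂ := fun t => Complex.exp (c * φ t) with hE
  set U : ℝ → ℂ := fun t => (c * (f1 t : ℂ))⁻¹ with hU
  set U' : ℝ → ℂ := fun t => -(c * (f2 t : ℂ)) / (c * (f1 t : ℂ)) ^ 2 with hU'
  have hEnorm : ∀ x : ℝ, ‖Complex.exp (c * (x:ℝ))‖ = 1 := by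
    intro x
    rw [Complex.norm_exp]
    have : (c * (x:ℝ)).re = 0 := by
      simp [hc, Complex.mul_re, Complex.mul_im]
    rw [this, Real.exp_zero]
  have hdE : ∀ t ∈ Icc u v, HasDerivAt E (c * f1 t * E t) t := by
    intro t ht
    simpa [hE, mul_comm] using (((hd1 t ht).ofReal_comp).const_mul c).cexp
  have hdU : ∀ t ∈ Icc u v, HasDerivAt U (U' t) t := by
    intro t ht
    have h1 : HasDerivAt (fun y => c * (f1 y : ℂ)) (c * (f2 t : ℂ)) t :=
      ((hd2 t ht).ofReal_comp).const_mul c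
    have h := (hasDerivAt_inv (hcf1ne t ht)).scomp t h1
    have heq : (c * (f2 t : ℂ)) • (-((c * (f1 t : ℂ)) ^ 2)⁻¹) = U' t := by
      rw [hU']; show (c * (f2 t : ℂ)) * (-((c * (f1 t : ℂ)) ^ 2)⁻¹) = -(c * (f2 t : ℂ)) / (c * (f1 t : ℂ)) ^ 2; ring
    rw [heq] at h
    exact h
  have hc1 : ContinuousOn f1 (Icc u v) := fun t ht =>
    (hd2 t ht).continuousAt.continuousWithinAt
  have hcE : ContinuousOn E (Icc u v) := fun t ht =>
    (hdE t ht).continuousAt.continuousWithinAt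
  have hcU' : ContinuousOn U' (Icc u v) := by
    apply ContinuousOn.div
    · exact (continuousOn_const.mul (Complex.continuous_ofReal.comp_continuousOn hc2)).neg
    · exact (continuousOn_const.mul (Complex.continuous_ofReal.comp_continuousOn hc1)).pow 2
    · intro t ht
      exact pow_ne_zero 2 (hcf1ne t ht)
  have hcU : ContinuousOn U (Icc u v) := fun t ht => (hdU t ht).continuousAt.continuousWithinAt
  have hcE' : ContinuousOn (fun t => c * (f1 t : ℂ) * E t) (Icc u v) :=
    (continuousOn_const.mul (Complex.continuous_ofReal.comp_continuousOn hc1)).mul hcE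
  have hIoo : Ioo (min u v) (max u v) ⊆ Icc u v := by
    rw [min_eq_left huv, max_eq_right huv]; exact Ioo_subset_Icc_self
  have hibp := integral_mul_deriv_eq_deriv_mul_of_hasDerivAt
    (u := U) (v := E) (u' := U') (v' := fun t => c * (f1 t : ℂ) * E t)
    (by rwa [huIcc]) (by rwa [huIcc])
    (fun x hx => hdU x (hIoo hx)) (fun x hx => hdE x (hIoo hx))
    ((by rwa [huIcc] : ContinuousOn U' (uIcc u v)).intervalIntegrable)
    ((by rwa [huIcc] : ContinuousOn (fun t => c * (f1 t : ℂ) * E t) (uIcc u v)).intervalIntegrable)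
  have hLHS : ∫ t in u..v, U t * (c * (f1 t : ℂ) * E t) = ∫ t in u..v, E t := by
    apply integral_congr
    intro t ht
    rw [huIcc] at ht
    show U t * _ = E t
    rw [hU, ← mul_assoc, inv_mul_cancel₀ (hcf1ne t ht), one_mul]
  rw [hLHS] at hibp
  have hUnorm : ∀ t ∈ Icc u v, ‖U t‖ ≤ (δ * |lam|)⁻¹ := by
    intro t ht
    rw [hU, norm_inv, norm_mul, hcnorm, Complex.norm_real, Real.norm_eq_abs]
    have hle : δ * |lam| ≤ |lam| * |f1 t| := by nlinarith [h1 t ht, hlam', abs_nonneg (f1 t)]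
    exact inv_anti₀ (by positivity) hle
  have hEn : ∀ t : ℝ, ‖E t‖ = 1 := fun t => hEnorm (φ t)
  have hUv : ‖U v * E v‖ ≤ (δ * |lam|)⁻¹ := by
    rw [norm_mul, hEn, mul_one]
    exact hUnorm v (right_mem_Icc.2 huv)
  have hUu : ‖U u * E u‖ ≤ (δ * |lam|)⁻¹ := by
    rw [norm_mul, hEn, mul_one]
    exact hUnorm u (left_mem_Icc.2 huv)
  -- third term
  have hptw : ∀ t ∈ Icc u v, ‖U' t * E t‖ = |f2 t| / (f1 t) ^ 2 * |lam|⁻¹ := by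
    intro t ht
    have h2 : |f1 t| ^ 2 = (f1 t) ^ 2 := sq_abs _
    have hf1 : (f1 t) ^ 2 ≠ 0 := pow_ne_zero 2 (hf1ne t ht)
    have hlamne : |lam| ≠ 0 := ne_of_gt hlam'
    rw [norm_mul, hEn, mul_one, hU']
    simp only [norm_div, norm_neg, norm_mul, norm_pow, hcnorm, Complex.norm_real,
      Real.norm_eq_abs]
    rw [mul_pow, h2]
    field_simp
  have hG : ∀ t ∈ Icc u v, HasDerivAt (fun t => -(f1 t)⁻¹) (f2 t / (f1 t) ^ 2) t := by
    intro t ht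
    have := ((hd2 t ht).inv (hf1ne t ht)).neg
    rw [neg_div, neg_neg] at this; exact this
  have hcint : ContinuousOn (fun t => f2 t / (f1 t) ^ 2) (Icc u v) :=
    hc2.div (hc1.pow 2) (fun t ht => pow_ne_zero 2 (hf1ne t ht))
  have hFTC : ∫ t in u..v, f2 t / (f1 t) ^ 2 = -(f1 v)⁻¹ - -(f1 u)⁻¹ :=
    integral_eq_sub_of_hasDerivAt (fun t ht => hG t (by rwa [huIcc] at ht))
      ((by rwa [huIcc] : ContinuousOn (fun t => f2 t / (f1 t) ^ 2) (uIcc u v)).intervalIntegrable)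
  have hGb : ∀ t ∈ Icc u v, |(f1 t)⁻¹| ≤ δ⁻¹ := by
    intro t ht
    rw [abs_inv]
    exact inv_anti₀ hδ (h1 t ht)
  have habs : ∫ t in u..v, |f2 t| / (f1 t) ^ 2 ≤ 2 / δ := by
    have hbv := hGb v (right_mem_Icc.2 huv)
    have hbu := hGb u (left_mem_Icc.2 huv)
    have h2δ : -(f1 v)⁻¹ - -(f1 u)⁻¹ ≤ 2/δ ∧ -(-(f1 v)⁻¹ - -(f1 u)⁻¹) ≤ 2/δ := by
      constructor <;>
      · have := abs_le.1 (le_refl |(f1 v)⁻¹|)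
        have := abs_le.1 (le_refl |(f1 u)⁻¹|)
        have h1' := neg_abs_le (f1 v)⁻¹
        have h2' := le_abs_self (f1 v)⁻¹
        have h3' := neg_abs_le (f1 u)⁻¹
        have h4' := le_abs_self (f1 u)⁻¹
        rw [div_eq_mul_inv]
        linarith
    rcases hsgn with hpos | hneg
    · have : ∫ t in u..v, |f2 t| / (f1 t) ^ 2 = ∫ t in u..v, f2 t / (f1 t) ^ 2 := by
        apply integral_congr
        intro t ht
        rw [huIcc] at ht
        simp only
        rw [abs_of_nonneg (hpos t ht)]
      rw [this, hFTC]
      exact h2δ.1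
    · have : ∫ t in u..v, |f2 t| / (f1 t) ^ 2 = ∫ t in u..v, -(f2 t / (f1 t) ^ 2) := by
        apply integral_congr
        intro t ht
        rw [huIcc] at ht
        simp only
        rw [abs_of_nonpos (hneg t ht), neg_div]
      rw [this, intervalIntegral.integral_neg, hFTC]
      exact h2δ.2
  have hthird : ‖∫ t in u..v, U' t * E t‖ ≤ 2 / δ * |lam|⁻¹ := by
    calc ‖∫ t in u..v, U' t * E t‖ ≤ ∫ t in u..v, ‖U' t * E t‖ :=
          intervalIntegral.norm_integral_le_integral_norm huv
      _ = ∫ t in u..v, |f2 t| / (f1 t) ^ 2 * |lam|⁻¹ := by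
          apply integral_congr
          intro t ht
          rw [huIcc] at ht
          exact hptw t ht
      _ = (∫ t in u..v, |f2 t| / (f1 t) ^ 2) * |lam|⁻¹ := by
          rw [intervalIntegral.integral_mul_const]
      _ ≤ 2 / δ * |lam|⁻¹ := by
          apply mul_le_mul_of_nonneg_right habs (by positivity)
  calc ‖∫ t in u..v, Complex.exp (Complex.I * lam * φ t)‖
      = ‖U v * E v - U u * E u - ∫ t in u..v, U' t * E t‖ := by rw [← hibp]
    _ ≤ ‖U v * E v - U u * E u‖ + ‖∫ t in u..v, U' t * E t‖ := norm_sub_le _ _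
    _ ≤ (‖U v * E v‖ + ‖U u * E u‖) + ‖∫ t in u..v, U' t * E t‖ := by
        gcongr; exact norm_sub_le _ _
    _ ≤ ((δ * |lam|)⁻¹ + (δ * |lam|)⁻¹) + 2 / δ * |lam|⁻¹ := by gcongr
    _ = 4 / (δ * |lam|) := by field_simp; ring


lemma vdc_enorm (lam x : ℝ) : ‖Complex.exp (Complex.I * lam * x)‖ = 1 := by
  rw [Complex.norm_exp]
  have : (Complex.I * lam * (x:ℝ)).re = 0 := by
    simp [Complex.mul_re, Complex.mul_im]
  rw [this, Real.exp_zero]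


variable {f : ℕ → ℝ → ℝ} {φ : ℝ → ℝ} {a b lam : ℝ} {k : ℕ}




lemma vdc_main (hk : 2 ≤ k) (hlam : lam ≠ 0) (hf0 : f 0 = φ)
    (hd : ∀ i, i < k → ∀ t ∈ Ioo a b, HasDerivAt (f i) (f (i+1) t) t)
    (hc : ∀ i, i ≤ k → ContinuousOn (f i) (Ioo a b)) :
    ∀ j : ℕ, 1 ≤ j → j ≤ k → ∀ δ : ℝ, 0 < δ → ∀ u v : ℝ, u ≤ v → Icc u v ⊆ Ioo a b →
      (∀ t ∈ Icc u v, δ ≤ |f j t|) →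
      ((j = 1) → ((∀ t ∈ Icc u v, 0 ≤ f 2 t) ∨ (∀ t ∈ Icc u v, f 2 t ≤ 0))) →
      ‖∫ t in u..v, Complex.exp (Complex.I * lam * φ t)‖
        ≤ (6:ℝ)^j * (δ * |lam|) ^ (-(1:ℝ)/(j:ℝ)) := by
  have hlam' : (0:ℝ) < |lam| := abs_pos.2 hlam
  intro j hj
  induction j, hj using Nat.le_induction with
  | base =>
    intro hjk δ hδ u v huv hsub hlb hsgn
    have hd1 : ∀ t ∈ Icc u v, HasDerivAt φ (f 1 t) t := by
      intro t ht
      have := hd 0 (by omega) t (hsub ht)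
      rwa [hf0] at this
    have hd2 : ∀ t ∈ Icc u v, HasDerivAt (f 1) (f 2 t) t :=
      fun t ht => hd 1 (by omega) t (hsub ht)
    have hc2 : ContinuousOn (f 2) (Icc u v) := (hc 2 hk).mono hsub
    refine le_trans (vdc_osc1 hδ hlam huv hd1 hd2 hc2 hlb (hsgn rfl)) ?_
    have hM : (0:ℝ) < δ * |lam| := by positivity
    rw [show (-(1:ℝ)/((1:ℕ):ℝ)) = -1 by norm_num, Real.rpow_neg_one]
    rw [div_eq_mul_inv]
    have : (0:ℝ) ≤ (δ * |lam|)⁻¹ := by positivity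
    nlinarith
  | succ j hj ih =>
    intro hjk δ hδ u v huv hsub hlb hsgn
    have hjk' : j ≤ k := by omega
    have hjlt : j < k := by omega
    set M := δ * |lam| with hMdef
    have hM : 0 < M := by positivity
    set ρ := M ^ (-(1:ℝ)/((j:ℝ)+1)) with hρdef
    have hρ : 0 < ρ := Real.rpow_pos_of_pos hM _
    obtain ⟨x0, hx0, Hpiv⟩ := vdc_pivot huv hδ
      (fun t ht => hd j hjlt t (hsub ht)) ((hc (j+1) (by omega)).mono hsub) hlb
    set p := max u (x0 - ρ) with hpdef
    set q := min v (x0 + ρ) with hqdef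
    have hup : u ≤ p := le_max_left _ _
    have hpx0 : p ≤ x0 := max_le hx0.1 (by linarith)
    have hx0q : x0 ≤ q := le_min hx0.2 (by linarith)
    have hqv : q ≤ v := min_le_left _ _
    have hpq : p ≤ q := hpx0.trans hx0q
    have hφc : ContinuousOn φ (Icc u v) := by
      have := (hc 0 (by omega)).mono hsub
      rwa [hf0] at this
    have hcE : ContinuousOn (fun t => Complex.exp (Complex.I * lam * φ t)) (Icc u v) :=
      Complex.continuous_exp.comp_continuousOn
        (continuousOn_const.mul (Complex.continuous_ofReal.comp_continuousOn hφc))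
    have hint : ∀ x y : ℝ, x ∈ Icc u v → y ∈ Icc u v →
        IntervalIntegrable (fun t => Complex.exp (Complex.I * lam * φ t)) volume x y := by
      intro x y hx hy
      apply ContinuousOn.intervalIntegrable
      apply hcE.mono
      rw [uIcc_eq_union]
      exact union_subset (Icc_subset_Icc hx.1 hy.2) (Icc_subset_Icc hy.1 hx.2)
    have hpmem : p ∈ Icc u v := ⟨hup, hpx0.trans (hx0q.trans hqv)⟩
    have hqmem : q ∈ Icc u v := ⟨hup.trans hpq, hqv⟩
    have humem : u ∈ Icc u v := left_mem_Icc.2 huv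
    have hvmem : v ∈ Icc u v := right_mem_Icc.2 huv
    have e1 := integral_add_adjacent_intervals (hint u p humem hpmem) (hint p q hpmem hqmem)
    have e2 := integral_add_adjacent_intervals (hint u q humem hqmem) (hint q v hqmem hvmem)
    -- key exponent identity
    have hjR : (0:ℝ) < (j:ℝ) := by exact_mod_cast hj
    have hkey : (δ * ρ * |lam|) ^ (-(1:ℝ)/(j:ℝ)) = ρ := by
      have h1 : δ * ρ * |lam| = M ^ ((1:ℝ) + -(1:ℝ)/((j:ℝ)+1)) := by
        rw [Real.rpow_add hM, Real.rpow_one, hρdef, hMdef]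
        ring
      rw [h1, ← Real.rpow_mul hM.le, hρdef]
      congr 1
      field_simp
      ring
    -- middle bound
    have hmid : ‖∫ t in p..q, Complex.exp (Complex.I * lam * φ t)‖ ≤ 2 * ρ := by
      have := intervalIntegral.norm_integral_le_of_norm_le_const
        (C := 1) (f := fun t => Complex.exp (Complex.I * lam * φ t)) (a := p) (b := q)
        (fun x _ => le_of_eq (vdc_enorm lam (φ x)))
      refine this.trans ?_
      rw [one_mul, abs_of_nonneg (by linarith)]
      have h1 : q ≤ x0 + ρ := min_le_right _ _
      have h2 : x0 - ρ ≤ p := le_max_right _ _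
      linarith
    -- side bounds
    have hside : ∀ w z : ℝ, w ∈ Icc u v → z ∈ Icc u v → w ≤ z →
        (∀ t ∈ Icc w z, ρ ≤ |t - x0|) →
        ‖∫ t in w..z, Complex.exp (Complex.I * lam * φ t)‖ ≤ (6:ℝ)^j * ρ := by
      intro w z hw hz hwz hfar
      have hsub' : Icc w z ⊆ Icc u v := Icc_subset_Icc hw.1 hz.2
      have hlb' : ∀ t ∈ Icc w z, δ * ρ ≤ |f j t| := by
        intro t ht
        have h1 := Hpiv t (hsub' ht)
        have h2 := hfar t ht
        nlinarith
      have hsgn' : j = 1 → ((∀ t ∈ Icc w z, 0 ≤ f 2 t) ∨ (∀ t ∈ Icc w z, f 2 t ≤ 0)) := by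
        intro hj1
        have hne : ∀ t ∈ Icc u v, f 2 t ≠ 0 := by
          intro t ht h0
          have := hlb t ht
          rw [hj1] at this
          rw [show (1+1 : ℕ) = 2 from rfl, h0, abs_zero] at this
          linarith
        rcases vdc_sign ((hc 2 hk).mono hsub) hne with h | h
        · exact Or.inl (fun t ht => h t (hsub' ht))
        · exact Or.inr (fun t ht => h t (hsub' ht))
      have := ih hjk' (δ * ρ) (by positivity) w z hwz (hsub'.trans hsub) hlb' hsgn'
      rwa [hkey] at this
    have hleft : ‖∫ t in u..p, Complex.exp (Complex.I * lam * φ t)‖ ≤ (6:ℝ)^j * ρ := by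
      rcases eq_or_lt_of_le hup with heq | hlt
      · rw [← heq]
        simp only [intervalIntegral.integral_same, norm_zero]
        positivity
      · have hp : p = x0 - ρ := by
          rcases max_cases u (x0 - ρ) with ⟨h1, h2⟩ | ⟨h1, h2⟩
          · rw [hpdef, h1] at hlt; exact absurd hlt (lt_irrefl u)
          · rw [hpdef, h1]
        apply hside u p humem hpmem hup
        intro t ht
        rw [abs_of_nonpos (by rw [hp] at ht; linarith [ht.2, hx0.1])]
        rw [hp] at ht
        linarith [ht.2]
    have hright : ‖∫ t in q..v, Complex.exp (Complex.I * lam * φ t)‖ ≤ (6:ℝ)^j * ρ := by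
      rcases eq_or_lt_of_le hqv with heq | hlt
      · rw [heq]
        simp only [intervalIntegral.integral_same, norm_zero]
        positivity
      · have hq : q = x0 + ρ := by
          rcases min_cases v (x0 + ρ) with ⟨h1, h2⟩ | ⟨h1, h2⟩
          · rw [hqdef, h1] at hlt; exact absurd hlt (lt_irrefl v)
          · rw [hqdef, h1]
        apply hside q v hqmem hvmem hqv
        intro t ht
        rw [abs_of_nonneg (by rw [hq] at ht; linarith [ht.1])]
        rw [hq] at ht
        linarith [ht.1]
    -- combine
    have hρeq : (δ * |lam|) ^ (-(1:ℝ)/((j+1:ℕ):ℝ)) = ρ := by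
      rw [hρdef, hMdef]
      congr 1
      push_cast
      ring
    rw [hρeq]
    calc ‖∫ t in u..v, Complex.exp (Complex.I * lam * φ t)‖
        = ‖(∫ t in u..p, Complex.exp (Complex.I * lam * φ t))
            + (∫ t in p..q, Complex.exp (Complex.I * lam * φ t))
            + (∫ t in q..v, Complex.exp (Complex.I * lam * φ t))‖ := by rw [e1, e2]
      _ ≤ ‖(∫ t in u..p, Complex.exp (Complex.I * lam * φ t))
            + (∫ t in p..q, Complex.exp (Complex.I * lam * φ t))‖
            + ‖∫ t in q..v, Complex.exp (Complex.I * lam * φ t)‖ := norm_add_le _ _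
      _ ≤ (‖∫ t in u..p, Complex.exp (Complex.I * lam * φ t)‖
            + ‖∫ t in p..q, Complex.exp (Complex.I * lam * φ t)‖)
            + ‖∫ t in q..v, Complex.exp (Complex.I * lam * φ t)‖ := by
          gcongr; exact norm_add_le _ _
      _ ≤ ((6:ℝ)^j * ρ + 2 * ρ) + (6:ℝ)^j * ρ := by gcongr
      _ ≤ (6:ℝ)^(j+1) * ρ := by
          have h6 : (1:ℝ) ≤ (6:ℝ)^j := one_le_pow₀ (by norm_num)
          rw [pow_succ]
          nlinarith



lemma vdc_amp {E : ℝ → ℂ} {ψ g1 : ℝ → ℝ} {a b u v B : ℝ}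
    (hB : 0 ≤ B) (hu : a < u) (huv : u ≤ v) (hv : v < b)
    (hEc : ContinuousOn E (Ioo a b))
    (hbound : ∀ x y : ℝ, a < x → x ≤ y → y < b → ‖∫ t in x..y, E t‖ ≤ B)
    (hψd : ∀ x ∈ Ioo a b, HasDerivAt (fun t => (ψ t : ℂ)) ((g1 x : ℂ)) x)
    (hg1c : ContinuousOn g1 (Icc a b)) :
    ‖∫ t in u..v, E t * (ψ t : ℂ)‖ ≤ B * |ψ v| + (∫ t in u..v, |g1 t|) * B := by
  have hsub : Icc u v ⊆ Ioo a b := fun t ht => ⟨lt_of_lt_of_le hu ht.1, lt_of_le_of_lt ht.2 hv⟩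
  have hsub2 : Icc u v ⊆ Icc a b := hsub.trans Ioo_subset_Icc_self
  have huIcc : uIcc u v = Icc u v := uIcc_of_le huv
  have humem : u ∈ Icc u v := left_mem_Icc.2 huv
  have hvmem : v ∈ Icc u v := right_mem_Icc.2 huv
  set F : ℝ → ℂ := fun x => ∫ t in u..x, E t with hFdef
  have hintE : ∀ x y : ℝ, x ∈ Icc u v → y ∈ Icc u v → IntervalIntegrable E volume x y := by
    intro x y hx hy
    apply ContinuousOn.intervalIntegrable
    apply hEc.mono
    refine Subset.trans ?_ hsub
    rw [uIcc_eq_union]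
    exact union_subset (Icc_subset_Icc hx.1 hy.2) (Icc_subset_Icc hy.1 hx.2)
  have hF : ∀ x ∈ Icc u v, HasDerivAt F (E x) x := by
    intro x hx
    exact intervalIntegral.integral_hasDerivAt_right (hintE u x humem hx)
      (hEc.stronglyMeasurableAtFilter isOpen_Ioo x (hsub hx))
      (hEc.continuousAt (isOpen_Ioo.mem_nhds (hsub hx)))
  have hψcont : ContinuousOn (fun t => (ψ t : ℂ)) (Icc u v) := fun x hx =>
    (hψd x (hsub hx)).continuousAt.continuousWithinAt
  have hFcont : ContinuousOn F (Icc u v) := fun x hx =>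
    (hF x hx).continuousAt.continuousWithinAt
  have hg1cont : ContinuousOn (fun t => (g1 t : ℂ)) (Icc u v) :=
    Complex.continuous_ofReal.comp_continuousOn (hg1c.mono hsub2)
  have hIoo : Ioo (min u v) (max u v) ⊆ Icc u v := by
    rw [min_eq_left huv, max_eq_right huv]; exact Ioo_subset_Icc_self
  have hibp := integral_mul_deriv_eq_deriv_mul_of_hasDerivAt
    (u := fun t => (ψ t : ℂ)) (v := F) (u' := fun t => (g1 t : ℂ)) (v' := E)
    (by rwa [huIcc]) (by rwa [huIcc])
    (fun x hx => hψd x (hsub (hIoo hx))) (fun x hx => hF x (hIoo hx))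
    ((by rwa [huIcc] : ContinuousOn (fun t => (g1 t : ℂ)) (uIcc u v)).intervalIntegrable)
    (hintE u v humem hvmem)
  have hFu : F u = 0 := intervalIntegral.integral_same
  rw [hFu, mul_zero, sub_zero] at hibp
  have hswap : (∫ t in u..v, E t * (ψ t : ℂ)) = ∫ t in u..v, (ψ t : ℂ) * E t := by
    simp_rw [mul_comm]
  rw [hswap, hibp]
  have hFv : ‖F v‖ ≤ B := hbound u v hu huv hv
  have hψv : ‖(ψ v : ℂ)‖ = |ψ v| := by rw [Complex.norm_real, Real.norm_eq_abs]
  have hterm2 : ‖∫ x in u..v, (g1 x : ℂ) * F x‖ ≤ (∫ t in u..v, |g1 t|) * B := by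
    calc ‖∫ x in u..v, (g1 x : ℂ) * F x‖ ≤ ∫ x in u..v, ‖(g1 x : ℂ) * F x‖ :=
          intervalIntegral.norm_integral_le_integral_norm huv
      _ ≤ ∫ x in u..v, |g1 x| * B := by
          apply intervalIntegral.integral_mono_on huv
          · exact ((hg1cont.mul hFcont).norm.mono huIcc.subset).intervalIntegrable
          · exact (((hg1c.mono hsub2).abs.mul continuousOn_const).mono huIcc.subset).intervalIntegrable
          · intro x hx
            rw [norm_mul, Complex.norm_real, Real.norm_eq_abs]
            exact mul_le_mul_of_nonneg_left
              (hbound u x hu hx.1 (lt_of_le_of_lt hx.2 hv)) (abs_nonneg _)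
      _ = (∫ t in u..v, |g1 t|) * B := by
          rw [intervalIntegral.integral_mul_const]
  calc ‖(ψ v : ℂ) * F v - ∫ x in u..v, (g1 x : ℂ) * F x‖
      ≤ ‖(ψ v : ℂ) * F v‖ + ‖∫ x in u..v, (g1 x : ℂ) * F x‖ := norm_sub_le _ _
    _ ≤ B * |ψ v| + (∫ t in u..v, |g1 t|) * B := by
        apply add_le_add ?_ hterm2
        rw [norm_mul, hψv, mul_comm]
        exact mul_le_mul_of_nonneg_right hFv (abs_nonneg _)




theorem stmt11 (k : ℕ) (hk : 2 ≤ k) :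
    ∃ C : ℝ, 0 < C ∧ ∀ (a b : ℝ), a < b → ∀ φ : ℝ → ℝ,
      ContDiffOn ℝ k φ (Set.Ioo a b) →
      (∀ t ∈ Set.Ioo a b, 1 ≤ |iteratedDerivWithin k φ (Set.Ioo a b) t|) →
      ∀ lam : ℝ, lam ≠ 0 → ∀ ψ : ℝ → ℝ, ContDiffOn ℝ 1 ψ (Set.Icc a b) →
        ‖∫ t in Set.Ioo a b, Complex.exp (Complex.I * lam * φ t) * (ψ t : ℂ)‖ ≤
          C * |lam| ^ (-(1 : ℝ) / k) *
            (|ψ b| + ∫ t in Set.Ioo a b, |derivWithin ψ (Set.Icc a b) t|) := by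
  refine ⟨(6:ℝ)^k, by positivity, ?_⟩
  intro a b hab φ hφ hder lam hlam ψ hψ
  have hlam' : (0:ℝ) < |lam| := abs_pos.2 hlam
  set s : Set ℝ := Ioo a b with hsdef
  have hsopen : IsOpen s := isOpen_Ioo
  have hsu : UniqueDiffOn ℝ s := hsopen.uniqueDiffOn
  set f : ℕ → ℝ → ℝ := fun i => iteratedDerivWithin i φ s with hfdef
  have hf0 : f 0 = φ := funext fun x => by simp [hfdef]
  have hc : ∀ i, i ≤ k → ContinuousOn (f i) s := fun i hi =>
    hφ.continuousOn_iteratedDerivWithin (by exact_mod_cast hi) hsu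
  have hd : ∀ i, i < k → ∀ t ∈ s, HasDerivAt (f i) (f (i+1) t) t := by
    intro i hi t ht
    have hdiff : DifferentiableOn ℝ (f i) s :=
      hφ.differentiableOn_iteratedDerivWithin (by exact_mod_cast hi) hsu
    have hda : DifferentiableAt ℝ (f i) t :=
      (hdiff t ht).differentiableAt (hsopen.mem_nhds ht)
    have heq : f (i+1) t = deriv (f i) t := by
      have h1 : f (i+1) t = derivWithin (f i) s t := congrFun iteratedDerivWithin_succ t
      rw [h1]
      exact derivWithin_of_isOpen hsopen ht
    rw [heq]
    exact hda.hasDerivAt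
  set E : ℝ → ℂ := fun t => Complex.exp (Complex.I * lam * φ t) with hEdef
  set B : ℝ := (6:ℝ)^k * |lam| ^ (-(1:ℝ)/(k:ℝ)) with hBdef
  have hB : 0 ≤ B := by positivity
  have hbound : ∀ x y : ℝ, a < x → x ≤ y → y < b → ‖∫ t in x..y, E t‖ ≤ B := by
    intro x y hx hxy hy
    have hsubxy : Icc x y ⊆ s := fun t ht => ⟨lt_of_lt_of_le hx ht.1, lt_of_le_of_lt ht.2 hy⟩
    have := vdc_main hk hlam hf0 hd hc k (by omega) le_rfl 1 one_pos x y hxy hsubxy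
      (fun t ht => hder t (hsubxy ht)) (fun h => absurd h (by omega))
    rwa [one_mul] at this
  have hEc : ContinuousOn E s := by
    have hφc : ContinuousOn φ s := by have := hc 0 (by omega); rwa [hf0] at this
    exact Complex.continuous_exp.comp_continuousOn
      (continuousOn_const.mul (Complex.continuous_ofReal.comp_continuousOn hφc))
  set g1 : ℝ → ℝ := fun t => derivWithin ψ (Icc a b) t with hg1def
  have hg1c : ContinuousOn g1 (Icc a b) :=
    hψ.continuousOn_derivWithin (uniqueDiffOn_Icc hab) le_rfl
  have hψd : ∀ x ∈ s, HasDerivAt (fun t => (ψ t : ℂ)) ((g1 x : ℂ)) x := by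
    intro x hx
    have hnh : Icc a b ∈ nhds x := Icc_mem_nhds hx.1 hx.2
    have hdw : DifferentiableWithinAt ℝ ψ (Icc a b) x :=
      (hψ.differentiableOn one_ne_zero) x (Ioo_subset_Icc_self hx)
    have hda : DifferentiableAt ℝ ψ x := hdw.differentiableAt hnh
    have heq : g1 x = deriv ψ x := by rw [hg1def]; exact derivWithin_of_mem_nhds hnh
    have : HasDerivAt ψ (g1 x) x := by rw [heq]; exact hda.hasDerivAt
    exact this.ofReal_comp
  have hψc : ContinuousOn ψ (Icc a b) := hψ.continuousOn
  -- integrability on Ioo a b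
  have hmes : MeasurableSet s := measurableSet_Ioo
  have hψcc : ContinuousOn (fun t => (ψ t : ℂ)) s := fun x hx =>
    Complex.continuous_ofReal.continuousAt.comp_continuousWithinAt
      ((hψc.mono Ioo_subset_Icc_self) x hx)
  have hfint : IntegrableOn (fun t => E t * (ψ t : ℂ)) s := by
    obtain ⟨Cb, hCb⟩ := (isCompact_Icc (a := a) (b := b)).exists_bound_of_continuousOn hψc
    refine ⟨(hEc.mul hψcc).aestronglyMeasurable hmes, ?_⟩
    apply HasFiniteIntegral.restrict_of_bounded (C := Cb) (by rw [hsdef]; exact measure_Ioo_lt_top)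
    rw [ae_restrict_iff' hmes]
    apply ae_of_all
    intro x hx
    have h1 : ‖E x‖ = 1 := by
      rw [hEdef]
      rw [Complex.norm_exp]
      have : (Complex.I * lam * (φ x : ℝ)).re = 0 := by
        simp [Complex.mul_re, Complex.mul_im]
      rw [this, Real.exp_zero]
    rw [norm_mul, h1, one_mul, Complex.norm_real]
    exact hCb x (Ioo_subset_Icc_self hx)
  have hg1int : IntegrableOn (fun t => |g1 t|) s :=
    (hg1c.abs.integrableOn_Icc).mono_set Ioo_subset_Icc_self
  -- approximating sequences
  set cc : ℝ := (a + b)/2 with hccdef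
  set d1 : ℝ := cc - a with hd1def
  set d2 : ℝ := b - cc with hd2def
  have hd1 : 0 < d1 := by rw [hd1def, hccdef]; linarith
  have hd2 : 0 < d2 := by rw [hd2def, hccdef]; linarith
  set un : ℕ → ℝ := fun n => a + d1 * (1/(n+1)) with hundef
  set vn : ℕ → ℝ := fun n => b - d2 * (1/(n+1)) with hvndef
  have hfrac : ∀ n : ℕ, 0 < (1:ℝ)/(n+1) ∧ (1:ℝ)/(n+1) ≤ 1 := by
    intro n
    constructor
    · positivity
    · rw [div_le_one (by positivity)]
      linarith [Nat.cast_nonneg (α := ℝ) n]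
  have haun : ∀ n, a < un n := by
    intro n; rw [hundef]; simp only
    nlinarith [(hfrac n).1]
  have hunc : ∀ n, un n ≤ cc := by
    intro n; rw [hundef]; simp only
    nlinarith [(hfrac n).2, (hfrac n).1]
  have hcvn : ∀ n, cc ≤ vn n := by
    intro n; rw [hvndef]; simp only
    nlinarith [(hfrac n).2, (hfrac n).1]
  have hvnb : ∀ n, vn n < b := by
    intro n; rw [hvndef]; simp only
    nlinarith [(hfrac n).1]
  have hunvn : ∀ n, un n ≤ vn n := fun n => (hunc n).trans (hcvn n)
  have hfrac_anti : ∀ m n : ℕ, m ≤ n → (1:ℝ)/(n+1) ≤ (1:ℝ)/(m+1) := by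
    intro m n h
    apply one_div_le_one_div_of_le (by positivity)
    have : (m:ℝ) ≤ (n:ℝ) := by exact_mod_cast h
    linarith
  have hmono : Monotone (fun n => Ioc (un n) (vn n)) := by
    intro m n hmn
    apply Ioc_subset_Ioc
    · rw [hundef]; simp only
      nlinarith [hfrac_anti m n hmn]
    · rw [hvndef]; simp only
      nlinarith [hfrac_anti m n hmn]
  have t0 : Tendsto (fun n : ℕ => (1:ℝ)/(n+1)) atTop (nhds 0) :=
    tendsto_one_div_add_atTop_nhds_zero_nat
  have hsU : (⋃ n, Ioc (un n) (vn n)) = s := by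
    ext x
    simp only [mem_iUnion]
    constructor
    · rintro ⟨n, hx⟩
      exact ⟨lt_trans (haun n) hx.1, lt_of_le_of_lt hx.2 (hvnb n)⟩
    · intro hx
      have t1 : Tendsto (fun n : ℕ => d1 * (1/(n+1))) atTop (nhds 0) := by
        have := t0.const_mul d1
        rwa [mul_zero] at this
      have t2 : Tendsto (fun n : ℕ => d2 * (1/(n+1))) atTop (nhds 0) := by
        have := t0.const_mul d2
        rwa [mul_zero] at this
      have h1 : ∀ᶠ n : ℕ in Filter.atTop, d1 * (1/(n+1)) < x - a :=
        t1.eventually_lt_const (by linarith [hx.1])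
      have h2 : ∀ᶠ n : ℕ in Filter.atTop, d2 * (1/(n+1)) < b - x :=
        t2.eventually_lt_const (by linarith [hx.2])
      obtain ⟨n, hn1, hn2⟩ := (h1.and h2).exists
      refine ⟨n, mem_Ioc.2 ⟨?_, ?_⟩⟩
      · rw [hundef]; simp only; linarith
      · rw [hvndef]; simp only; linarith
  -- per-n bound
  have hIocsub : ∀ n, Ioc (un n) (vn n) ⊆ s := by
    intro n x hx
    exact ⟨lt_trans (haun n) hx.1, lt_of_le_of_lt hx.2 (hvnb n)⟩
  have hbn : ∀ n, ‖∫ t in (un n)..(vn n), E t * (ψ t : ℂ)‖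
      ≤ B * |ψ (vn n)| + (∫ t in s, |g1 t|) * B := by
    intro n
    refine (vdc_amp hB (haun n) (hunvn n) (hvnb n) hEc hbound hψd hg1c).trans ?_
    have hle : (∫ t in (un n)..(vn n), |g1 t|) ≤ ∫ t in s, |g1 t| := by
      rw [intervalIntegral.integral_of_le (hunvn n)]
      apply setIntegral_mono_set hg1int
      · exact ae_of_all _ (fun x => abs_nonneg _)
      · exact HasSubset.Subset.eventuallyLE (hIocsub n)
    gcongr
  -- convergence
  have hT1 : Tendsto (fun n => ∫ t in (un n)..(vn n), E t * (ψ t : ℂ)) atTop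
      (nhds (∫ t in s, E t * (ψ t : ℂ))) := by
    have := tendsto_setIntegral_of_monotone (fun n => measurableSet_Ioc) hmono
      (by rw [hsU]; exact hfint)
    rw [hsU] at this
    refine this.congr (fun n => ?_)
    rw [intervalIntegral.integral_of_le (hunvn n)]
  have hT1n : Tendsto (fun n => ‖∫ t in (un n)..(vn n), E t * (ψ t : ℂ)‖) atTop
      (nhds ‖∫ t in s, E t * (ψ t : ℂ)‖) := hT1.norm
  have hvb : Tendsto vn atTop (nhds b) := by
    have := t0.const_mul d2
    rw [mul_zero] at this
    have h := tendsto_const_nhds (α := ℕ) (f := Filter.atTop) (x := b) |>.sub this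
    rw [sub_zero] at h
    exact h
  have hψvb : Tendsto (fun n => |ψ (vn n)|) atTop (nhds (|ψ b|)) := by
    have hbmem : b ∈ Icc a b := right_mem_Icc.2 hab.le
    have hcw : Tendsto ψ (nhdsWithin b (Icc a b)) (nhds (ψ b)) := (hψc b hbmem).tendsto
    have hvn_in : ∀ n, vn n ∈ Icc a b := fun n =>
      ⟨by linarith [haun n, hunvn n], (hvnb n).le⟩
    have : Tendsto vn atTop (nhdsWithin b (Icc a b)) :=
      tendsto_nhdsWithin_of_tendsto_nhds_of_eventually_within vn hvb
        (Filter.Eventually.of_forall hvn_in)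
    exact (continuous_abs.tendsto _).comp (hcw.comp this)
  have hT2 : Tendsto (fun n => B * |ψ (vn n)| + (∫ t in s, |g1 t|) * B) atTop
      (nhds (B * |ψ b| + (∫ t in s, |g1 t|) * B)) :=
    ((hψvb.const_mul B)).add tendsto_const_nhds
  have hfinal : ‖∫ t in s, E t * (ψ t : ℂ)‖ ≤ B * |ψ b| + (∫ t in s, |g1 t|) * B :=
    le_of_tendsto_of_tendsto' hT1n hT2 hbn
  calc ‖∫ t in s, E t * (ψ t : ℂ)‖ ≤ B * |ψ b| + (∫ t in s, |g1 t|) * B := hfinal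
    _ = (6:ℝ)^k * |lam| ^ (-(1 : ℝ) / k) * (|ψ b| + ∫ t in s, |g1 t|) := by
        rw [hBdef]; ring
end
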